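/- Let p, q ∈ EuclideanSpace ℝ (Fin 3) and let σ = (ρ_p ⊗ ρ_q + ρ_q ⊗ ρ_p)/2. Let U be the 4×4 matrix with rows (1,0,0,0), (0, 1/√2, 1/√2, 0), (0,0,0,1), (0, 1/√2, −1/√2, 0). Then U * σ * Uᴴ is block diagonal: its fourth row and fourth column vanish except for the (4,4) entry, which equals (1 − ⟪p, q⟫)/4, and its upper-left 3×3 block has entries (in terms of p_± = p₁ ± i p₂, q_± = q₁ ± i q₂, p_z = p₃, q_z = q₃): (1,1) = (1+q_z)(1+p_z)/4, (1,2) = (q_−(1+p_z) + p_−(1+q_z))/(4√2), (1,3) = p_− q_− /4, (2,2) = (1 − p_z q_z + p₁q₁ + p₂q₂)/4, (2,3) = (p_−(1−q_z) + q_−(1−p_z))/(4√2), (3,3) = (1−q_z)(1−p_z)/4, with the remaining entries determined by Hermiticity. -/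

import Mathlib

open Matrix
open scoped RealInnerProductSpace

noncomputable def blochMat (p : EuclideanSpace ℝ (Fin 3)) : Matrix (Fin 2) (Fin 2) ℂ :=
  (1 / 2 : ℂ) • ((1 : Matrix (Fin 2) (Fin 2) ℂ)
    + (p 0 : ℂ) • !![0, 1; 1, 0]
    + (p 1 : ℂ) • !![0, -Complex.I; Complex.I, 0]
    + (p 2 : ℂ) • !![1, 0; 0, -1])
def idx : Fin 4 → Fin 2 × Fin 2 := ![(0, 0), (0, 1), (1, 0), (1, 1)]
def kron4 (A B : Matrix (Fin 2) (Fin 2) ℂ) : Matrix (Fin 4) (Fin 4) ℂ :=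
  Matrix.of fun i j => A (idx i).1 (idx j).1 * B (idx i).2 (idx j).2
noncomputable def angU : Matrix (Fin 4) (Fin 4) ℂ :=
  !![1, 0, 0, 0;
     0, (1 / Real.sqrt 2 : ℝ), (1 / Real.sqrt 2 : ℝ), 0;
     0, 0, 0, 1;
     0, (1 / Real.sqrt 2 : ℝ), (-(1 / Real.sqrt 2) : ℝ), 0]

lemma bloch_eq (p : EuclideanSpace ℝ (Fin 3)) : blochMat p =
    !![(1 + (p 2 : ℂ)) / 2, ((p 0 : ℂ) - (p 1 : ℂ) * Complex.I) / 2;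
       ((p 0 : ℂ) + (p 1 : ℂ) * Complex.I) / 2, (1 - (p 2 : ℂ)) / 2] := by
  ext i j
  fin_cases i <;> fin_cases j <;>
    simp [blochMat, Matrix.one_apply] <;> ring

lemma kron4_eq (A B : Matrix (Fin 2) (Fin 2) ℂ) : kron4 A B =
    !![A 0 0 * B 0 0, A 0 0 * B 0 1, A 0 1 * B 0 0, A 0 1 * B 0 1;
       A 0 0 * B 1 0, A 0 0 * B 1 1, A 0 1 * B 1 0, A 0 1 * B 1 1;
       A 1 0 * B 0 0, A 1 0 * B 0 1, A 1 1 * B 0 0, A 1 1 * B 0 1;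
       A 1 0 * B 1 0, A 1 0 * B 1 1, A 1 1 * B 1 0, A 1 1 * B 1 1] := by
  ext i j
  fin_cases i <;> fin_cases j <;> rfl

lemma kron4_conjTranspose (A B : Matrix (Fin 2) (Fin 2) ℂ) :
    (kron4 A B)ᴴ = kron4 Aᴴ Bᴴ := by
  ext i j
  simp only [kron4, Matrix.conjTranspose_apply, Matrix.of_apply, star_mul']
  try ring

lemma bloch_herm (p : EuclideanSpace ℝ (Fin 3)) : (blochMat p)ᴴ = blochMat p := by
  rw [bloch_eq]
  ext i j
  fin_cases i <;> fin_cases j <;>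
    simp [Matrix.conjTranspose_apply, Complex.ext_iff]

set_option maxHeartbeats 40000000 in
theorem symmetrized_state_block_diagonal (p q : EuclideanSpace ℝ (Fin 3))
    (σ T : Matrix (Fin 4) (Fin 4) ℂ)
    (hσ : σ = (1 / 2 : ℂ) •
      (kron4 (blochMat p) (blochMat q) + kron4 (blochMat q) (blochMat p)))
    (hT : T = angU * σ * angUᴴ) :
    (T 3 0 = 0 ∧ T 3 1 = 0 ∧ T 3 2 = 0 ∧ T 0 3 = 0 ∧ T 1 3 = 0 ∧ T 2 3 = 0) ∧
    T 3 3 = (((1 - ⟪p, q⟫) / 4 : ℝ) : ℂ) ∧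
    T 0 0 = (((1 + q 2) * (1 + p 2) / 4 : ℝ) : ℂ) ∧
    T 0 1 = (((q 0 : ℂ) - (q 1 : ℂ) * Complex.I) * (1 + (p 2 : ℂ))
              + ((p 0 : ℂ) - (p 1 : ℂ) * Complex.I) * (1 + (q 2 : ℂ)))
            / (4 * (Real.sqrt 2 : ℂ)) ∧
    T 0 2 = ((p 0 : ℂ) - (p 1 : ℂ) * Complex.I) * ((q 0 : ℂ) - (q 1 : ℂ) * Complex.I) / 4 ∧
    T 1 1 = (((1 - p 2 * q 2 + p 0 * q 0 + p 1 * q 1) / 4 : ℝ) : ℂ) ∧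
    T 1 2 = (((p 0 : ℂ) - (p 1 : ℂ) * Complex.I) * (1 - (q 2 : ℂ))
              + ((q 0 : ℂ) - (q 1 : ℂ) * Complex.I) * (1 - (p 2 : ℂ)))
            / (4 * (Real.sqrt 2 : ℂ)) ∧
    T 2 2 = (((1 - q 2) * (1 - p 2) / 4 : ℝ) : ℂ) ∧
    Tᴴ = T := by
  have hσH : σᴴ = σ := by
    rw [hσ]
    rw [Matrix.conjTranspose_smul, Matrix.conjTranspose_add,
      kron4_conjTranspose, kron4_conjTranspose, bloch_herm, bloch_herm]
    congr 1
    simp [Complex.ext_iff]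
  have hTH : Tᴴ = T := by
    rw [hT, Matrix.conjTranspose_mul, Matrix.conjTranspose_mul,
      Matrix.conjTranspose_conjTranspose, hσH, Matrix.mul_assoc]
  have hip : ⟪p, q⟫ = p 0 * q 0 + p 1 * q 1 + p 2 * q 2 := by
    simp [PiLp.inner_apply, RCLike.inner_apply, Fin.sum_univ_three]
    ring
  subst hσ hT
  have h2 : ((Real.sqrt 2 : ℝ) : ℂ) * ((Real.sqrt 2 : ℝ) : ℂ) = 2 := by
    rw [← Complex.ofReal_mul, Real.mul_self_sqrt (by norm_num : (0:ℝ) ≤ 2)]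
    norm_num
  have h2' : ((Real.sqrt 2 : ℝ) : ℂ) ^ 2 = 2 := by rw [sq]; exact h2
  have hne : ((Real.sqrt 2 : ℝ) : ℂ) ≠ 0 := by
    simp [Real.sqrt_ne_zero'.mpr (by norm_num : (0:ℝ) < 2)]
  rw [hip]
  refine ⟨⟨?_, ?_, ?_, ?_, ?_, ?_⟩, ?_, ?_, ?_, ?_, ?_, ?_, ?_, hTH⟩ <;>
  · simp only [Matrix.mul_apply, Fin.sum_univ_four, angU, kron4_eq, bloch_eq,
      Matrix.conjTranspose_apply, Matrix.smul_apply, Matrix.add_apply, Matrix.of_apply,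
      Matrix.cons_val', Matrix.cons_val_zero, Matrix.cons_val_one, Matrix.head_cons,
      Matrix.cons_val_two, Matrix.cons_val_three, Matrix.tail_cons,
      Matrix.empty_val', Matrix.cons_val_fin_one, Matrix.head_fin_const,
      smul_eq_mul, star_one, star_zero, Complex.star_def, Complex.conj_ofReal, map_neg, map_zero, map_one]
    try push_cast
    try field_simp
    try ring_nf
    try simp only [h2', Complex.I_sq]
    try ring_nf
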